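/- Root exchange for branchings (Schrijver): Let B1 and B2 be disjoint branchings in a digraph with root sets R(B1) and R(B2), and let R1', R2' be vertex sets with R1' ∪ R2' = R(B1) ∪ R(B2) and R1' ∩ R2' = R(B1) ∩ R(B2). Then B1 ∪ B2 can be repartitioned into branchings B1', B2' with R(B1') = R1' and R(B2') = R2' if and only if every strongly connected component of B1 ∪ B2 with no entering arc intersects both R1' and R2'. -/

import Mathlib

set_option maxHeartbeats 1600000
set_option linter.unusedSectionVars false
set_option linter.unusedVariables false


variable {V : Type*} [Fintype V] [DecidableEq V]

/-- Number of elements of `FE` covering `v` (an edge covers both its endpoints). -/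
def edgeCoverCount (FE : Finset (Sym2 V)) (v : V) : ℕ :=
  (FE.filter (fun e => v ∈ e)).card

/-- Number of arcs of `FA` with head `v`. -/
def arcCoverCount (FA : Finset (V × V)) (v : V) : ℕ :=
  (FA.filter (fun a => a.2 = v)).card

/-- The multiset of undirected edges underlying the edge set `FE` and arc set `FA`. -/
def underlyingEdges (FE : Finset (Sym2 V)) (FA : Finset (V × V)) : Multiset (Sym2 V) :=
  FE.val + FA.val.map (fun a => s(a.1, a.2))

/-- A multiset of undirected edges is acyclic (a forest) iff every nonempty sub-multiset
touches strictly more vertices than its number of edges. -/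
def AcyclicEdgeMultiset (M : Multiset (Sym2 V)) : Prop :=
  ∀ S : Multiset (Sym2 V), S ≤ M → S ≠ 0 →
    Multiset.card S < (Finset.univ.filter (fun v : V => ∃ e ∈ S.toFinset, v ∈ e)).card

/-- A matching forest: acyclic underlying undirected graph and every vertex covered at most
once (endpoints of edges and heads of arcs count as covered). -/
def IsMatchingForest (FE : Finset (Sym2 V)) (FA : Finset (V × V)) : Prop :=
  AcyclicEdgeMultiset (underlyingEdges FE FA) ∧
    ∀ v : V, edgeCoverCount FE v + arcCoverCount FA v ≤ 1

/-- Reachability by a directed path (possibly of length 0) using arcs of `B`. -/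
def arcReach (B : Finset (V × V)) : V → V → Prop :=
  Relation.ReflTransGen (fun u v => (u, v) ∈ B)

/-- A branching: each vertex has in-degree at most one and there is no directed cycle. -/
def IsBranching (B : Finset (V × V)) : Prop :=
  (∀ v : V, arcCoverCount B v ≤ 1) ∧ ∀ a ∈ B, ¬ arcReach B a.2 a.1

/-- The root set of a branching: vertices with in-degree zero. -/
def rootSet (B : Finset (V × V)) : Finset V :=
  Finset.univ.filter (fun v => arcCoverCount B v = 0)

/-- A matching: every vertex is covered by at most one edge. -/
def IsMatching (FE : Finset (Sym2 V)) : Prop := ∀ v : V, edgeCoverCount FE v ≤ 1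

/-- The set of vertices covered by some edge of `FE`. -/
def edgeCovered (FE : Finset (Sym2 V)) : Finset V :=
  Finset.univ.filter (fun v => 0 < edgeCoverCount FE v)

/-- A mixed edge cover: every vertex is reachable by a directed path (possibly trivial)
in the arc part from an endpoint of some edge of the edge part. -/
def IsMixedEdgeCover (FE : Finset (Sym2 V)) (FA : Finset (V × V)) : Prop :=
  ∀ v : V, ∃ u : V, (∃ e ∈ FE, u ∈ e) ∧ arcReach FA u v

/-- A mixed covering forest: acyclic underlying undirected graph and every vertex covered
at least once. -/
def IsMixedCoveringForest (FE : Finset (Sym2 V)) (FA : Finset (V × V)) : Prop :=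
  AcyclicEdgeMultiset (underlyingEdges FE FA) ∧
    ∀ v : V, 1 ≤ edgeCoverCount FE v + arcCoverCount FA v

/-- The mix-size ⟨F⟩ = |F ∩ E| + |F ∩ A| / 2. -/
def mixSize (FE : Finset (Sym2 V)) (FA : Finset (V × V)) : ℚ :=
  (FE.card : ℚ) + (FA.card : ℚ) / 2


section RootExchangeAux

set_option linter.unusedSectionVars false
set_option maxHeartbeats 1600000

lemma mem_rootSet_iff (B : Finset (V × V)) (v : V) :
    v ∈ rootSet B ↔ arcCoverCount B v = 0 := by
  simp [rootSet]

lemma cc_ne_zero_of_mem {B : Finset (V × V)} {u v : V} (h : (u, v) ∈ B) :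
    arcCoverCount B v ≠ 0 :=
  Finset.card_ne_zero_of_mem (Finset.mem_filter.mpr ⟨h, rfl⟩)

lemma exists_pred_of_cc_ne_zero {B : Finset (V × V)} {v : V}
    (h : arcCoverCount B v ≠ 0) : ∃ u, (u, v) ∈ B := by
  have hne : (B.filter (fun a => a.2 = v)).Nonempty :=
    Finset.card_pos.mp (Nat.pos_of_ne_zero h)
  obtain ⟨⟨a1, a2⟩, ha⟩ := hne
  rw [Finset.mem_filter] at ha
  obtain rfl : a2 = v := ha.2
  exact ⟨a1, ha.1⟩

lemma cc_insert {B : Finset (V × V)} {a : V × V} (ha : a ∉ B) (v : V) :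
    arcCoverCount (insert a B) v = (if a.2 = v then 1 else 0) + arcCoverCount B v := by
  unfold arcCoverCount
  rw [Finset.filter_insert]
  split
  · rw [Finset.card_insert_of_notMem (fun h => ha (Finset.mem_filter.mp h).1)]
    omega
  · omega

lemma cc_union {B1 B2 : Finset (V × V)} (hd : Disjoint B1 B2) (v : V) :
    arcCoverCount (B1 ∪ B2) v = arcCoverCount B1 v + arcCoverCount B2 v := by
  unfold arcCoverCount
  rw [Finset.filter_union]
  exact Finset.card_union_of_disjoint (Finset.disjoint_filter_filter hd)

lemma exists_cycle_of_forall_pred {B : Finset (V × V)} {U : Finset V}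
    (hne : U.Nonempty) (h : ∀ v ∈ U, ∃ u ∈ U, (u, v) ∈ B) :
    ∃ a ∈ B, arcReach B a.2 a.1 := by
  classical
  choose! f hfU hfB using h
  obtain ⟨v0, hv0⟩ := hne
  have hmem : ∀ n, f^[n] v0 ∈ U := by
    intro n; induction n with
    | zero => simpa
    | succ n ih => rw [Function.iterate_succ_apply']; exact hfU _ ih
  have hpath : ∀ d n, arcReach B (f^[n + d] v0) (f^[n] v0) := by
    intro d
    induction d with
    | zero => intro n; exact Relation.ReflTransGen.refl
    | succ d ih =>
      intro n
      have h1 : (f (f^[n + d] v0), f^[n + d] v0) ∈ B := hfB _ (hmem _)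
      have h2 : arcReach B (f^[n + d + 1] v0) (f^[n + d] v0) := by
        rw [Function.iterate_succ_apply']
        exact Relation.ReflTransGen.single h1
      exact h2.trans (ih n)
  have key : ∀ i j : ℕ, i < j → f^[i] v0 = f^[j] v0 → ∃ a ∈ B, arcReach B a.2 a.1 := by
    intro i j hij heq
    refine ⟨(f (f^[i] v0), f^[i] v0), hfB _ (hmem i), ?_⟩
    show arcReach B (f^[i] v0) (f (f^[i] v0))
    rw [← Function.iterate_succ_apply' f i v0]
    obtain ⟨d, rfl⟩ : ∃ d, j = (i + 1) + d := ⟨j - (i + 1), by omega⟩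
    rw [heq]
    exact hpath d (i + 1)
  obtain ⟨i, j, hij, heq⟩ := Finite.exists_ne_map_eq_of_infinite (fun n => f^[n] v0)
  rcases Ne.lt_or_gt hij with h' | h'
  · exact key i j h' heq
  · exact key j i h' heq.symm

lemma arcReach_insert {B : Finset (V × V)} {a0 : V × V} {x y : V}
    (h : arcReach (insert a0 B) x y) :
    arcReach B x y ∨ (arcReach B a0.2 y ∧ arcReach (insert a0 B) x a0.1) := by
  induction h with
  | refl => exact Or.inl Relation.ReflTransGen.refl
  | tail hxb hby ih =>
    rcases Finset.mem_insert.mp hby with h1 | h1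
    · obtain rfl := h1.symm
      exact Or.inr ⟨Relation.ReflTransGen.refl, hxb⟩
    · rcases ih with h2 | h2
      · exact Or.inl (h2.tail h1)
      · exact Or.inr ⟨h2.1.tail h1, h2.2⟩

lemma eq_of_arcReach_root {B : Finset (V × V)} {x u : V}
    (hu : arcCoverCount B u = 0) (h : arcReach B x u) : x = u := by
  revert hu
  induction h with
  | refl => intro _; rfl
  | tail hxb hby ih =>
    intro hc
    exact absurd hc (cc_ne_zero_of_mem hby)

lemma isBranching_insert {B : Finset (V × V)} {a0 : V × V} (hB : IsBranching B)
    (h0 : arcCoverCount B a0.2 = 0) (hr : ¬ arcReach B a0.2 a0.1) :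
    IsBranching (insert a0 B) := by
  have ha0 : a0 ∉ B := by
    intro h
    exact cc_ne_zero_of_mem (show (a0.1, a0.2) ∈ B by rwa [Prod.mk.eta]) h0
  constructor
  · intro v
    rw [cc_insert ha0]
    by_cases hv : a0.2 = v
    · subst hv; rw [if_pos rfl, h0]
    · rw [if_neg hv]; simpa using hB.1 v
  · intro a ha hre
    rcases arcReach_insert hre with hca | hca
    · rcases Finset.mem_insert.mp ha with rfl | haB
      · exact hr hca
      · exact hB.2 a haB hca
    · rcases arcReach_insert hca.2 with h2 | h2
      · rcases Finset.mem_insert.mp ha with rfl | haB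
        · exact hr hca.1
        · exact hr ((hca.1.tail (show ((a.1, a.2) : V × V) ∈ B by rwa [Prod.mk.eta])).trans h2)
      · exact hr h2.1

def entersF (D : Finset (V × V)) (U : Finset V) : Finset (V × V) :=
  D.filter (fun a => a.2 ∈ U ∧ a.1 ∉ U)

lemma entersF_submod (D : Finset (V × V)) (U W : Finset V) :
    (entersF D (U ∩ W)).card + (entersF D (U ∪ W)).card ≤
      (entersF D U).card + (entersF D W).card := by
  have h1 : entersF D (U ∩ W) ∪ entersF D (U ∪ W) ⊆ entersF D U ∪ entersF D W := by
    intro a ha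
    simp only [entersF, Finset.mem_union, Finset.mem_filter, Finset.mem_inter] at *
    tauto
  have h2 : entersF D (U ∩ W) ∩ entersF D (U ∪ W) ⊆ entersF D U ∩ entersF D W := by
    intro a ha
    simp only [entersF, Finset.mem_union, Finset.mem_filter, Finset.mem_inter] at *
    tauto
  calc (entersF D (U ∩ W)).card + (entersF D (U ∪ W)).card
      = (entersF D (U ∩ W) ∪ entersF D (U ∪ W)).card
        + (entersF D (U ∩ W) ∩ entersF D (U ∪ W)).card :=
        (Finset.card_union_add_card_inter _ _).symm
    _ ≤ (entersF D U ∪ entersF D W).card + (entersF D U ∩ entersF D W).card :=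
        add_le_add (Finset.card_le_card h1) (Finset.card_le_card h2)
    _ = (entersF D U).card + (entersF D W).card := Finset.card_union_add_card_inter _ _

def goodCond (D : Finset (V × V)) (R1 R2 : Finset V) : Prop :=
  ∀ U : Finset V, U.Nonempty →
    (if (U ∩ R1).Nonempty then 0 else 1) + (if (U ∩ R2).Nonempty then 0 else 1)
      ≤ (entersF D U).card

lemma goodCond_symm {D : Finset (V × V)} {R1 R2 : Finset V} (h : goodCond D R1 R2) :
    goodCond D R2 R1 := by
  intro U hU
  rw [add_comm]
  exact h U hU

lemma entersF_erase (D : Finset (V × V)) (a : V × V) (U : Finset V) :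
    entersF (D.erase a) U = (entersF D U).erase a := by
  ext b
  simp only [entersF, Finset.mem_filter, Finset.mem_erase]
  tauto

lemma goodCond_erase {D : Finset (V × V)} {R1 R2 : Finset V} {u v : V}
    (h : goodCond D R1 R2) (hu : u ∈ R1) (hv : v ∉ R1) (ha : (u, v) ∈ D)
    (hblock : ∀ U : Finset V, v ∈ U → u ∉ U → (U ∩ R1).Nonempty → U ∩ R2 = ∅ →
      2 ≤ (entersF D U).card) :
    goodCond (D.erase (u, v)) (insert v R1) R2 := by
  intro U hUne
  rw [entersF_erase]
  by_cases hvU : v ∈ U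
  · have ht1 : (U ∩ insert v R1).Nonempty :=
      ⟨v, Finset.mem_inter.mpr ⟨hvU, Finset.mem_insert_self _ _⟩⟩
    rw [if_pos ht1]
    by_cases ht2 : (U ∩ R2).Nonempty
    · simp [ht2]
    · rw [if_neg ht2]
      have hUR2 : U ∩ R2 = ∅ := Finset.not_nonempty_iff_eq_empty.mp ht2
      by_cases huU : u ∈ U
      · have hnotin : (u, v) ∉ entersF D U := by
          simp [entersF, huU]
        rw [Finset.erase_eq_of_notMem hnotin]
        have h' := h U hUne
        rw [if_neg ht2] at h'
        omega
      · have hin : (u, v) ∈ entersF D U := by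
          simp [entersF, ha, hvU, huU]
        have hcard : 2 ≤ (entersF D U).card := by
          by_cases hUR1 : (U ∩ R1).Nonempty
          · exact hblock U hvU huU hUR1 hUR2
          · have h' := h U hUne
            rw [if_neg hUR1, if_neg ht2] at h'
            omega
        rw [Finset.card_erase_of_mem hin]
        omega
  · have hnotin : (u, v) ∉ entersF D U := by
      simp [entersF, hvU]
    rw [Finset.erase_eq_of_notMem hnotin]
    have hiff : (U ∩ insert v R1).Nonempty ↔ (U ∩ R1).Nonempty := by
      constructor
      · rintro ⟨x, hx⟩
        rw [Finset.mem_inter, Finset.mem_insert] at hx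
        rcases hx.2 with rfl | hxR
        · exact absurd hx.1 hvU
        · exact ⟨x, Finset.mem_inter.mpr ⟨hx.1, hxR⟩⟩
      · rintro ⟨x, hx⟩
        rw [Finset.mem_inter] at hx
        exact ⟨x, Finset.mem_inter.mpr ⟨hx.1, Finset.mem_insert_of_mem hx.2⟩⟩
    by_cases hUR1 : (U ∩ R1).Nonempty
    · rw [if_pos (hiff.mpr hUR1)]
      have h' := h U hUne
      rw [if_pos hUR1] at h'
      exact h'
    · rw [if_neg (fun hh => hUR1 (hiff.mp hh))]
      have h' := h U hUne
      rw [if_neg hUR1] at h'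
      exact h'

lemma edmonds_step {D : Finset (V × V)} {R1 R2 : Finset V}
    (h : goodCond D R1 R2) (hR1 : R1 ≠ Finset.univ) :
    ∃ u v, u ∈ R1 ∧ v ∉ R1 ∧ (u, v) ∈ D ∧
      goodCond (D.erase (u, v)) (insert v R1) R2 := by
  classical
  set Dang := (Finset.univ : Finset (Finset V)).filter
      (fun U => (U ∩ R1).Nonempty ∧ U ∩ R2 = ∅ ∧ (entersF D U).card = 1 ∧
        (U \ R1).Nonempty) with hDang
  by_cases hD : Dang.Nonempty
  · obtain ⟨Us, hUsmem, hmin⟩ := Finset.exists_min_image Dang Finset.card hD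
    rw [hDang, Finset.mem_filter] at hUsmem
    obtain ⟨-, hR1s, hR2s, hcs, hdiffs⟩ := hUsmem
    set Z := Us \ R1 with hZ
    have hZR1 : Z ∩ R1 = ∅ := Finset.sdiff_inter_self _ _
    have hZR2 : Z ∩ R2 = ∅ := by
      have : Z ∩ R2 ⊆ Us ∩ R2 := Finset.inter_subset_inter (Finset.sdiff_subset) le_rfl
      rw [hR2s] at this
      exact Finset.subset_empty.mp this
    have h2Z : 2 ≤ (entersF D Z).card := by
      have h' := h Z hdiffs
      rw [if_neg (by rw [hZR1]; exact Finset.not_nonempty_empty),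
        if_neg (by rw [hZR2]; exact Finset.not_nonempty_empty)] at h'
      omega
    have hex : ∃ a ∈ entersF D Z, a.1 ∈ Us := by
      by_contra hno
      push_neg at hno
      have hsub : entersF D Z ⊆ entersF D Us := by
        intro a haz
        have h1 := (Finset.mem_filter.mp haz)
        refine Finset.mem_filter.mpr ⟨h1.1, Finset.sdiff_subset h1.2.1, hno a haz⟩
      have := Finset.card_le_card hsub
      omega
    obtain ⟨a, haZ, haUs⟩ := hex
    have haf := Finset.mem_filter.mp haZ
    have hvZ : a.2 ∈ Z := haf.2.1
    have hvnR1 : a.2 ∉ R1 := (Finset.mem_sdiff.mp hvZ).2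
    have huR1 : a.1 ∈ R1 := by
      by_contra huc
      exact haf.2.2 (Finset.mem_sdiff.mpr ⟨haUs, huc⟩)
    refine ⟨a.1, a.2, huR1, hvnR1, by rw [Prod.mk.eta]; exact haf.1, ?_⟩
    refine goodCond_erase h huR1 hvnR1 (by rw [Prod.mk.eta]; exact haf.1) ?_
    intro U hvU huU hNE1 hE2
    by_contra hlt
    push_neg at hlt
    have hU1 : (entersF D U).card = 1 := by
      have h' := h U ⟨a.2, hvU⟩
      have hn2 : ¬(U ∩ R2).Nonempty := by rw [hE2]; exact Finset.not_nonempty_empty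
      rw [if_pos hNE1, if_neg hn2] at h'
      omega
    have hvW : a.2 ∈ U ∩ Us := Finset.mem_inter.mpr ⟨hvU, (Finset.mem_sdiff.mp hvZ).1⟩
    have hWR2 : (U ∩ Us) ∩ R2 = ∅ := by
      have hsb : (U ∩ Us) ∩ R2 ⊆ U ∩ R2 :=
        Finset.inter_subset_inter (Finset.inter_subset_left) le_rfl
      rw [hE2] at hsb
      exact Finset.subset_empty.mp hsb
    have hUU2 : (U ∪ Us) ∩ R2 = ∅ := by
      rw [Finset.eq_empty_iff_forall_notMem]
      intro x hx
      rw [Finset.mem_inter, Finset.mem_union] at hx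
      rcases hx.1 with hxm | hxm
      · exact Finset.eq_empty_iff_forall_notMem.mp hE2 x (Finset.mem_inter.mpr ⟨hxm, hx.2⟩)
      · exact Finset.eq_empty_iff_forall_notMem.mp hR2s x (Finset.mem_inter.mpr ⟨hxm, hx.2⟩)
    have hUUcard : 1 ≤ (entersF D (U ∪ Us)).card := by
      have h' := h (U ∪ Us) ⟨a.2, Finset.mem_union_left _ hvU⟩
      have hn2 : ¬((U ∪ Us) ∩ R2).Nonempty := by rw [hUU2]; exact Finset.not_nonempty_empty
      rw [if_neg hn2] at h'
      split at h' <;> omega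
    have hsubmod := entersF_submod D U Us
    have hWn2 : ¬((U ∩ Us) ∩ R2).Nonempty := by rw [hWR2]; exact Finset.not_nonempty_empty
    by_cases hWR1 : ((U ∩ Us) ∩ R1).Nonempty
    · have hWcard : (entersF D (U ∩ Us)).card = 1 := by
        have h' := h (U ∩ Us) ⟨a.2, hvW⟩
        rw [if_pos hWR1, if_neg hWn2] at h'
        omega
      have hWDang : U ∩ Us ∈ Dang := by
        rw [hDang, Finset.mem_filter]
        exact ⟨Finset.mem_univ _, hWR1, hWR2, hWcard,
          ⟨a.2, Finset.mem_sdiff.mpr ⟨hvW, hvnR1⟩⟩⟩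
      have hWsub : U ∩ Us ⊆ Us := Finset.inter_subset_right
      have hWeq : U ∩ Us = Us := Finset.eq_of_subset_of_card_le hWsub (hmin _ hWDang)
      have haU : a.1 ∈ U := by
        have haW : a.1 ∈ U ∩ Us := by rw [hWeq]; exact haUs
        exact (Finset.mem_inter.mp haW).1
      exact huU haU
    · have h' := h (U ∩ Us) ⟨a.2, hvW⟩
      rw [if_neg hWR1, if_neg hWn2] at h'
      omega
  · have hU0 : (R1ᶜ : Finset V).Nonempty := by
      by_contra hc
      rw [Finset.not_nonempty_iff_eq_empty] at hc
      refine hR1 (Finset.eq_univ_iff_forall.mpr (fun x => ?_))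
      by_contra hx
      have hxc : x ∈ R1ᶜ := Finset.mem_compl.mpr hx
      rw [hc] at hxc
      exact absurd hxc (Finset.notMem_empty x)
    have h' := h R1ᶜ hU0
    have hcompl : (R1ᶜ ∩ R1 : Finset V) = ∅ := by ext x; simp
    rw [if_neg (by rw [hcompl]; exact Finset.not_nonempty_empty)] at h'
    have hcard : 1 ≤ (entersF D R1ᶜ).card := by omega
    obtain ⟨a, haE⟩ := Finset.card_pos.mp (by omega : 0 < (entersF D R1ᶜ).card)
    have haf := Finset.mem_filter.mp haE
    have hv : a.2 ∉ R1 := by simpa using haf.2.1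
    have hu : a.1 ∈ R1 := by
      have := haf.2.2
      simpa using this
    refine ⟨a.1, a.2, hu, hv, by rw [Prod.mk.eta]; exact haf.1, ?_⟩
    refine goodCond_erase h hu hv (by rw [Prod.mk.eta]; exact haf.1) ?_
    intro U hvU huU hNE1 hE2
    have h'' := h U ⟨a.2, hvU⟩
    rw [if_pos hNE1, if_neg (by rw [hE2]; exact Finset.not_nonempty_empty)] at h''
    rcases Nat.lt_or_ge (entersF D U).card 2 with hlt | hge
    · exfalso
      have hU1 : (entersF D U).card = 1 := by omega
      have : U ∈ Dang := by
        rw [hDang, Finset.mem_filter]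
        exact ⟨Finset.mem_univ _, hNE1, hE2, hU1, ⟨a.2, Finset.mem_sdiff.mpr ⟨hvU, hv⟩⟩⟩
      exact hD ⟨U, this⟩
    · exact hge

lemma branching_empty : IsBranching (∅ : Finset (V × V)) :=
  ⟨fun v => by simp [arcCoverCount], fun a ha => absurd ha (Finset.notMem_empty a)⟩

lemma eq_univ_of_compl_empty {s : Finset V} (h : (sᶜ : Finset V) = ∅) : s = Finset.univ := by
  refine Finset.eq_univ_iff_forall.mpr (fun x => ?_)
  by_contra hx
  have hxc : x ∈ sᶜ := Finset.mem_compl.mpr hx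
  rw [h] at hxc
  exact absurd hxc (Finset.notMem_empty x)

lemma branching_extend {C : Finset (V × V)} {R : Finset V} {u v : V}
    (hb : IsBranching C) (hcc : ∀ w, arcCoverCount C w = if w ∈ insert v R then 0 else 1)
    (hu : u ∈ R) (hv : v ∉ R) :
    IsBranching (insert (u, v) C) ∧
      ∀ w, arcCoverCount (insert (u, v) C) w = if w ∈ R then 0 else 1 := by
  have hcv : arcCoverCount C v = 0 := by rw [hcc]; simp
  have hcu : arcCoverCount C u = 0 := by rw [hcc]; simp [hu]
  have hne : u ≠ v := fun h => hv (h ▸ hu)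
  have hnr : ¬ arcReach C v u := fun h => hne (eq_of_arcReach_root hcu h).symm
  have hnin : (u, v) ∉ C := fun h => cc_ne_zero_of_mem h hcv
  constructor
  · exact isBranching_insert hb hcv hnr
  · intro w
    rw [cc_insert hnin]
    by_cases hw : v = w
    · subst hw
      rw [if_pos rfl, hcv, if_neg hv]
    · rw [if_neg hw, hcc]
      have hw' : w ≠ v := fun h => hw h.symm
      simp [Finset.mem_insert, hw']

lemma edmonds : ∀ (n : ℕ) (D : Finset (V × V)) (R1 R2 : Finset V),
    R1ᶜ.card + R2ᶜ.card ≤ n → goodCond D R1 R2 →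
    ∃ C1 C2 : Finset (V × V), C1 ⊆ D ∧ C2 ⊆ D ∧ Disjoint C1 C2 ∧
      IsBranching C1 ∧ IsBranching C2 ∧
      (∀ v, arcCoverCount C1 v = if v ∈ R1 then 0 else 1) ∧
      (∀ v, arcCoverCount C2 v = if v ∈ R2 then 0 else 1) := by
  intro n
  induction n with
  | zero =>
    intro D R1 R2 hn h
    have hR1 : R1 = Finset.univ := eq_univ_of_compl_empty (Finset.card_eq_zero.mp (by omega))
    have hR2 : R2 = Finset.univ := eq_univ_of_compl_empty (Finset.card_eq_zero.mp (by omega))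
    subst hR1; subst hR2
    exact ⟨∅, ∅, Finset.empty_subset _, Finset.empty_subset _, Finset.disjoint_empty_left _,
      branching_empty, branching_empty,
      fun v => by simp [arcCoverCount], fun v => by simp [arcCoverCount]⟩
  | succ n ih =>
    intro D R1 R2 hn h
    by_cases hR1 : R1 = Finset.univ
    · by_cases hR2 : R2 = Finset.univ
      · refine ih D R1 R2 ?_ h
        subst hR1; subst hR2
        simp
      · obtain ⟨u, v, huR, hvR, haD, h'⟩ := edmonds_step (goodCond_symm h) hR2
        have hmeas : (insert v R2)ᶜ.card + R1ᶜ.card ≤ n := by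
          rw [Finset.compl_insert, Finset.card_erase_of_mem (Finset.mem_compl.mpr hvR)]
          have hpos : 0 < R2ᶜ.card := Finset.card_pos.mpr ⟨v, Finset.mem_compl.mpr hvR⟩
          omega
        obtain ⟨C2, C1, hs2, hs1, hdis, hb2, hb1, hc2, hc1⟩ :=
          ih (D.erase (u, v)) (insert v R2) R1 hmeas h'
        obtain ⟨hb2', hc2'⟩ := branching_extend hb2 hc2 huR hvR
        refine ⟨C1, insert (u, v) C2, hs1.trans (Finset.erase_subset _ _),
          Finset.insert_subset haD (hs2.trans (Finset.erase_subset _ _)), ?_, hb1, hb2', hc1, hc2'⟩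
        rw [Finset.disjoint_insert_right]
        exact ⟨fun hmem => Finset.notMem_erase _ _ (hs1 hmem), hdis.symm⟩
    · obtain ⟨u, v, huR, hvR, haD, h'⟩ := edmonds_step h hR1
      have hmeas : (insert v R1)ᶜ.card + R2ᶜ.card ≤ n := by
        rw [Finset.compl_insert, Finset.card_erase_of_mem (Finset.mem_compl.mpr hvR)]
        have hpos : 0 < R1ᶜ.card := Finset.card_pos.mpr ⟨v, Finset.mem_compl.mpr hvR⟩
        omega
      obtain ⟨C1, C2, hs1, hs2, hdis, hb1, hb2, hc1, hc2⟩ :=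
        ih (D.erase (u, v)) (insert v R1) R2 hmeas h'
      obtain ⟨hb1', hc1'⟩ := branching_extend hb1 hc1 huR hvR
      refine ⟨insert (u, v) C1, C2,
        Finset.insert_subset haD (hs1.trans (Finset.erase_subset _ _)),
        hs2.trans (Finset.erase_subset _ _), ?_, hb1', hb2, hc1', hc2⟩
      rw [Finset.disjoint_insert_left]
      exact ⟨fun hmem => Finset.notMem_erase _ _ (hs2 hmem), hdis⟩

lemma closed_meets {D : Finset (V × V)} {R1 R2 : Finset V}
    (cond : ∀ v : V, (∀ a ∈ D, (arcReach D a.2 v ∧ arcReach D v a.2) →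
        (arcReach D a.1 v ∧ arcReach D v a.1)) →
      ((∃ x ∈ R1, arcReach D x v ∧ arcReach D v x) ∧
       (∃ x ∈ R2, arcReach D x v ∧ arcReach D v x)))
    {U : Finset V} (hne : U.Nonempty)
    (hc : ∀ a ∈ D, a.2 ∈ U → a.1 ∈ U) :
    (U ∩ R1).Nonempty ∧ (U ∩ R2).Nonempty := by
  classical
  have hclose : ∀ {w x : V}, arcReach D w x → x ∈ U → w ∈ U := by
    intro w x hr
    induction hr using Relation.ReflTransGen.head_induction_on with
    | refl => exact id
    | head hab hbx ih => exact fun hxU => hc _ hab (ih hxU)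
  set anc : V → Finset V := fun v => Finset.univ.filter (fun w => arcReach D w v) with hanc
  obtain ⟨v, hvU, hmin⟩ := Finset.exists_min_image U (fun v => (anc v).card) hne
  have hprem : ∀ a ∈ D, (arcReach D a.2 v ∧ arcReach D v a.2) →
      (arcReach D a.1 v ∧ arcReach D v a.1) := by
    rintro a haD ⟨h2v, -⟩
    have h1v : arcReach D a.1 v := Relation.ReflTransGen.head haD h2v
    have h1U : a.1 ∈ U := hclose h1v hvU
    have hsub : anc a.1 ⊆ anc v := by
      intro w hw
      rw [hanc, Finset.mem_filter] at *
      exact ⟨Finset.mem_univ _, hw.2.trans h1v⟩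
    have heq : anc a.1 = anc v := Finset.eq_of_subset_of_card_le hsub (hmin _ h1U)
    refine ⟨h1v, ?_⟩
    have hvm : v ∈ anc a.1 := by
      rw [heq, hanc, Finset.mem_filter]
      exact ⟨Finset.mem_univ _, Relation.ReflTransGen.refl⟩
    rw [hanc, Finset.mem_filter] at hvm
    exact hvm.2
  obtain ⟨⟨x1, hx1R, hx1r⟩, ⟨x2, hx2R, hx2r⟩⟩ := cond v hprem
  exact ⟨⟨x1, Finset.mem_inter.mpr ⟨hclose hx1r.1 hvU, hx1R⟩⟩,
    ⟨x2, Finset.mem_inter.mpr ⟨hclose hx2r.1 hvU, hx2R⟩⟩⟩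

lemma internal_lt {B : Finset (V × V)} (hB : IsBranching B) {U : Finset V} (hne : U.Nonempty) :
    (B.filter (fun a => a.2 ∈ U ∧ a.1 ∈ U)).card + 1 ≤ U.card := by
  classical
  set I := B.filter (fun a => a.2 ∈ U ∧ a.1 ∈ U) with hI
  have hfib : I.card = ∑ v ∈ U, (I.filter (fun a => a.2 = v)).card :=
    Finset.card_eq_sum_card_fiberwise (fun a ha => (Finset.mem_filter.mp ha).2.1)
  have hle1 : ∀ v ∈ U, (I.filter (fun a => a.2 = v)).card ≤ 1 := by
    intro v _
    refine le_trans (Finset.card_le_card ?_) (hB.1 v)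
    intro a ha
    rw [Finset.mem_filter] at ha
    have haI := Finset.mem_filter.mp ha.1
    exact Finset.mem_filter.mpr ⟨haI.1, ha.2⟩
  by_cases hall : ∀ v ∈ U, (I.filter (fun a => a.2 = v)).Nonempty
  · exfalso
    have hpred : ∀ v ∈ U, ∃ u ∈ U, (u, v) ∈ B := by
      intro v hv
      obtain ⟨⟨a1, a2⟩, ha⟩ := hall v hv
      rw [Finset.mem_filter, hI, Finset.mem_filter] at ha
      obtain ⟨⟨haB, hh2, hh1⟩, hav⟩ := ha
      obtain rfl : a2 = v := hav
      exact ⟨a1, hh1, haB⟩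
    obtain ⟨a, haB, har⟩ := exists_cycle_of_forall_pred hne hpred
    exact hB.2 a haB har
  · push_neg at hall
    obtain ⟨v0, hv0U, hv0⟩ := hall
    have hv00 : (I.filter (fun a => a.2 = v0)).card = 0 := by
      rw [Finset.card_eq_zero]
      exact hv0
    have hsum : I.card ≤ (U.erase v0).card := by
      rw [hfib, ← Finset.sum_erase_add U _ hv0U, hv00, add_zero]
      calc ∑ v ∈ U.erase v0, (I.filter (fun a => a.2 = v)).card
          ≤ ∑ _v ∈ U.erase v0, 1 :=
            Finset.sum_le_sum (fun i hi => hle1 i (Finset.mem_of_mem_erase hi))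
        _ = (U.erase v0).card := by simp
    have := Finset.card_erase_of_mem hv0U
    have hUpos : 0 < U.card := Finset.card_pos.mpr hne
    omega

lemma two_le_enters {B1 B2 : Finset (V × V)} (hd : Disjoint B1 B2)
    (h1 : IsBranching B1) (h2 : IsBranching B2) {U : Finset V} (hne : U.Nonempty)
    (hcov : ∀ v ∈ U, arcCoverCount B1 v ≠ 0 ∧ arcCoverCount B2 v ≠ 0) :
    2 ≤ (entersF (B1 ∪ B2) U).card := by
  classical
  set D := B1 ∪ B2 with hD
  set H := D.filter (fun a => a.2 ∈ U) with hH
  have hHcard : H.card = ∑ v ∈ U, (H.filter (fun a => a.2 = v)).card :=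
    Finset.card_eq_sum_card_fiberwise (fun a ha => (Finset.mem_filter.mp ha).2)
  have hHfib : ∀ v ∈ U, (H.filter (fun a => a.2 = v)).card = arcCoverCount D v := by
    intro v hv
    have hfeq : H.filter (fun a => a.2 = v) = D.filter (fun a => a.2 = v) := by
      ext a
      rw [hH]
      simp only [Finset.mem_filter]
      constructor
      · rintro ⟨⟨haD, -⟩, hh⟩; exact ⟨haD, hh⟩
      · rintro ⟨haD, hh⟩; exact ⟨⟨haD, hh ▸ hv⟩, hh⟩
    rw [hfeq]; rfl
  have hsum : 2 * U.card ≤ H.card := by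
    rw [hHcard]
    have hterm : ∀ v ∈ U, 2 ≤ (H.filter (fun a => a.2 = v)).card := by
      intro v hv
      rw [hHfib v hv, hD, cc_union hd]
      have := hcov v hv
      omega
    calc 2 * U.card = ∑ _v ∈ U, 2 := by
          rw [Finset.sum_const, smul_eq_mul, mul_comm]
      _ ≤ ∑ v ∈ U, (H.filter (fun a => a.2 = v)).card := Finset.sum_le_sum hterm
  have hsplit : (H.filter (fun a => a.1 ∈ U)).card + (H.filter (fun a => ¬ a.1 ∈ U)).card
      = H.card := Finset.card_filter_add_card_filter_not _
  have hIn : H.filter (fun a => a.1 ∈ U)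
      = (B1.filter (fun a => a.2 ∈ U ∧ a.1 ∈ U)) ∪ (B2.filter (fun a => a.2 ∈ U ∧ a.1 ∈ U)) := by
    ext a
    rw [hH, hD]
    simp only [Finset.mem_filter, Finset.mem_union]
    tauto
  have hEnt : H.filter (fun a => ¬ a.1 ∈ U) = entersF D U := by
    ext a
    rw [hH]
    simp only [entersF, Finset.mem_filter]
    tauto
  have hdisI : Disjoint (B1.filter (fun a => a.2 ∈ U ∧ a.1 ∈ U))
      (B2.filter (fun a => a.2 ∈ U ∧ a.1 ∈ U)) := Finset.disjoint_filter_filter hd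
  have hInCard : (H.filter (fun a => a.1 ∈ U)).card
      = (B1.filter (fun a => a.2 ∈ U ∧ a.1 ∈ U)).card
        + (B2.filter (fun a => a.2 ∈ U ∧ a.1 ∈ U)).card := by
    rw [hIn, Finset.card_union_of_disjoint hdisI]
  have hi1 := internal_lt h1 hne
  have hi2 := internal_lt h2 hne
  rw [hEnt] at hsplit
  omega

lemma if_count_eq {p q r s : Prop} [Decidable p] [Decidable q] [Decidable r] [Decidable s]
    (hor : p ∨ q ↔ r ∨ s) (hand : p ∧ q ↔ r ∧ s) :
    ((if p then 0 else 1) + (if q then 0 else 1) : ℕ)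
      = (if r then 0 else 1) + (if s then 0 else 1) := by
  by_cases hp : p <;> by_cases hq : q <;> by_cases hr : r <;> by_cases hs : s <;> simp_all

lemma goodCond_of_cond {B1 B2 : Finset (V × V)} {R1 R2 : Finset V}
    (hd : Disjoint B1 B2) (h1 : IsBranching B1) (h2 : IsBranching B2)
    (hu : R1 ∪ R2 = rootSet B1 ∪ rootSet B2)
    (cond : ∀ v : V, (∀ a ∈ B1 ∪ B2, (arcReach (B1 ∪ B2) a.2 v ∧ arcReach (B1 ∪ B2) v a.2) →
        (arcReach (B1 ∪ B2) a.1 v ∧ arcReach (B1 ∪ B2) v a.1)) →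
      ((∃ x ∈ R1, arcReach (B1 ∪ B2) x v ∧ arcReach (B1 ∪ B2) v x) ∧
       (∃ x ∈ R2, arcReach (B1 ∪ B2) x v ∧ arcReach (B1 ∪ B2) v x))) :
    goodCond (B1 ∪ B2) R1 R2 := by
  intro U hne
  have hone : ¬ (U ∩ R1).Nonempty ∨ ¬ (U ∩ R2).Nonempty →
      1 ≤ (entersF (B1 ∪ B2) U).card := by
    intro hcase
    by_contra hc
    push_neg at hc
    have hc0 : entersF (B1 ∪ B2) U = ∅ := Finset.card_eq_zero.mp (by omega)
    have hcl : ∀ a ∈ B1 ∪ B2, a.2 ∈ U → a.1 ∈ U := by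
      intro a ha hmem
      by_contra h1'
      have hmem2 : a ∈ entersF (B1 ∪ B2) U := Finset.mem_filter.mpr ⟨ha, hmem, h1'⟩
      rw [hc0] at hmem2
      exact absurd hmem2 (Finset.notMem_empty a)
    obtain ⟨hm1, hm2⟩ := closed_meets cond hne hcl
    rcases hcase with hcase | hcase
    · exact hcase hm1
    · exact hcase hm2
  by_cases hA : (U ∩ R1).Nonempty <;> by_cases hB : (U ∩ R2).Nonempty
  · rw [if_pos hA, if_pos hB]; omega
  · rw [if_pos hA, if_neg hB]
    simpa using hone (Or.inr hB)
  · rw [if_neg hA, if_pos hB]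
    simpa using hone (Or.inl hA)
  · rw [if_neg hA, if_neg hB]
    have hcov : ∀ v ∈ U, arcCoverCount B1 v ≠ 0 ∧ arcCoverCount B2 v ≠ 0 := by
      intro v hv
      have hvR1 : v ∉ R1 := fun hm => hA ⟨v, Finset.mem_inter.mpr ⟨hv, hm⟩⟩
      have hvR2 : v ∉ R2 := fun hm => hB ⟨v, Finset.mem_inter.mpr ⟨hv, hm⟩⟩
      have hvS : v ∉ rootSet B1 ∪ rootSet B2 := by
        rw [← hu]
        simp [hvR1, hvR2]
      rw [Finset.mem_union] at hvS
      push_neg at hvS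
      constructor
      · intro h0
        exact hvS.1 ((mem_rootSet_iff B1 v).mpr h0)
      · intro h0
        exact hvS.2 ((mem_rootSet_iff B2 v).mpr h0)
    exact two_le_enters hd h1 h2 hne hcov

end RootExchangeAux

theorem branching_root_exchange
    (B1 B2 : Finset (V × V)) (hd : Disjoint B1 B2)
    (h1 : IsBranching B1) (h2 : IsBranching B2)
    (R1 R2 : Finset V)
    (hu : R1 ∪ R2 = rootSet B1 ∪ rootSet B2)
    (hi : R1 ∩ R2 = rootSet B1 ∩ rootSet B2) :
    (∃ B1' B2' : Finset (V × V), Disjoint B1' B2' ∧ B1' ∪ B2' = B1 ∪ B2 ∧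
      IsBranching B1' ∧ IsBranching B2' ∧ rootSet B1' = R1 ∧ rootSet B2' = R2) ↔
    (∀ v : V,
      (∀ a ∈ B1 ∪ B2,
        (arcReach (B1 ∪ B2) a.2 v ∧ arcReach (B1 ∪ B2) v a.2) →
        (arcReach (B1 ∪ B2) a.1 v ∧ arcReach (B1 ∪ B2) v a.1)) →
      ((∃ x ∈ R1, arcReach (B1 ∪ B2) x v ∧ arcReach (B1 ∪ B2) v x) ∧
       (∃ x ∈ R2, arcReach (B1 ∪ B2) x v ∧ arcReach (B1 ∪ B2) v x))) := by
  classical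
  constructor
  · rintro ⟨C1, C2, hdis, hun, hb1, hb2, hr1, hr2⟩ v hv
    have main : ∀ (C : Finset (V × V)) (R : Finset V), C ⊆ B1 ∪ B2 → IsBranching C →
        rootSet C = R → ∃ x ∈ R, arcReach (B1 ∪ B2) x v ∧ arcReach (B1 ∪ B2) v x := by
      intro C R hsub hbC hrC
      by_contra hno
      push_neg at hno
      set K := Finset.univ.filter
        (fun w => arcReach (B1 ∪ B2) w v ∧ arcReach (B1 ∪ B2) v w) with hK
      have hvK : v ∈ K := Finset.mem_filter.mpr
        ⟨Finset.mem_univ _, Relation.ReflTransGen.refl, Relation.ReflTransGen.refl⟩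
      have hpred : ∀ w ∈ K, ∃ u ∈ K, (u, w) ∈ C := by
        intro w hw
        rw [hK, Finset.mem_filter] at hw
        have hwR : w ∉ R := by
          intro hwR1
          exact hno w hwR1 hw.2.1 hw.2.2
        have hcc : arcCoverCount C w ≠ 0 := by
          intro h0
          apply hwR
          rw [← hrC]
          exact (mem_rootSet_iff C w).mpr h0
        obtain ⟨u, huw⟩ := exists_pred_of_cc_ne_zero hcc
        have huD : (u, w) ∈ B1 ∪ B2 := hsub huw
        have hres := hv (u, w) huD ⟨hw.2.1, hw.2.2⟩
        exact ⟨u, Finset.mem_filter.mpr ⟨Finset.mem_univ _, hres.1, hres.2⟩, huw⟩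
      obtain ⟨a, haC, har⟩ := exists_cycle_of_forall_pred ⟨v, hvK⟩ hpred
      exact hbC.2 a haC har
    constructor
    · exact main C1 R1 (hun ▸ Finset.subset_union_left) hb1 hr1
    · exact main C2 R2 (hun ▸ Finset.subset_union_right) hb2 hr2
  · intro cond
    have hgc := goodCond_of_cond hd h1 h2 hu cond
    obtain ⟨C1, C2, hs1, hs2, hdis, hb1, hb2, hc1, hc2⟩ :=
      edmonds (R1ᶜ.card + R2ᶜ.card) (B1 ∪ B2) R1 R2 le_rfl hgc
    have hccB : ∀ (B : Finset (V × V)), IsBranching B →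
        ∀ v, arcCoverCount B v = if v ∈ rootSet B then 0 else 1 := by
      intro B hB v
      by_cases hvm : v ∈ rootSet B
      · rw [if_pos hvm]
        exact (mem_rootSet_iff B v).mp hvm
      · rw [if_neg hvm]
        have hle := hB.1 v
        have h0 : arcCoverCount B v ≠ 0 := fun h => hvm ((mem_rootSet_iff B v).mpr h)
        omega
    have cardC : ∀ (C : Finset (V × V)) (R : Finset V),
        (∀ v, arcCoverCount C v = if v ∈ R then 0 else 1) →
        C.card = ∑ v : V, (if v ∈ R then 0 else 1) := by
      intro C R hc
      rw [Finset.card_eq_sum_card_fiberwise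
        (f := fun a => a.2) (t := Finset.univ) (fun a _ => Finset.mem_univ _)]
      exact Finset.sum_congr rfl (fun v _ => hc v)
    have hcard : (C1 ∪ C2).card = (B1 ∪ B2).card := by
      rw [Finset.card_union_of_disjoint hdis, Finset.card_union_of_disjoint hd,
        cardC C1 R1 hc1, cardC C2 R2 hc2,
        cardC B1 (rootSet B1) (hccB B1 h1), cardC B2 (rootSet B2) (hccB B2 h2),
        ← Finset.sum_add_distrib, ← Finset.sum_add_distrib]
      refine Finset.sum_congr rfl (fun v _ => ?_)
      have hu' := Finset.ext_iff.mp hu v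
      have hi' := Finset.ext_iff.mp hi v
      simp only [Finset.mem_union, Finset.mem_inter] at hu' hi'
      exact if_count_eq hu' hi'
    have huneq : C1 ∪ C2 = B1 ∪ B2 :=
      Finset.eq_of_subset_of_card_le (Finset.union_subset hs1 hs2) (le_of_eq hcard.symm)
    refine ⟨C1, C2, hdis, huneq, hb1, hb2, ?_, ?_⟩
    · ext w
      rw [mem_rootSet_iff, hc1 w]
      by_cases hw : w ∈ R1 <;> simp [hw]
    · ext w
      rw [mem_rootSet_iff, hc2 w]
      by_cases hw : w ∈ R2 <;> simp [hw]
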